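/- Let q ∈ ℍ with ‖q‖ < 1 and let α, β ∈ ℍ. Let D_α denote the derivative at t = 0 of the real-variable map t ↦ 𝓕_q(q + t·α), where 𝓕_q(p) = (p²‖q‖² − 2·Re(q)·p + 1)⁻¹ · (p²q − p(q² + 1) + q), and similarly D_β. Then D_α · conj(D_β) = (1 − ‖q‖²)⁻² · (1 − q²)⁻¹ · (α − qαq) · conj(β − qβq) · (1 − conj(q)²)⁻¹. -/

import Mathlib

/-- The regular Möbius transformation `𝓕_a` in its explicit rational form. -/
noncomputable def regularMobius (a q : Quaternion ℝ) : Quaternion ℝ :=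
  (‖a‖ ^ 2 • q ^ 2 - (2 * a.re) • q + 1)⁻¹ * (q ^ 2 * a - q * (a ^ 2 + 1) + a)

lemma quat_char (q : Quaternion ℝ) :
    (2 * q.re) • q = q ^ 2 + ‖q‖ ^ 2 • (1 : Quaternion ℝ) := by
  have h1 : ((2 * q.re : ℝ) : Quaternion ℝ) * q = (2 * q.re) • q := by
    rw [Quaternion.coe_mul_eq_smul]
  have h2 : ((‖q‖ ^ 2 : ℝ) : Quaternion ℝ) = ‖q‖ ^ 2 • (1 : Quaternion ℝ) := by
    rw [← Quaternion.coe_mul_eq_smul, mul_one]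
  have hc : star q * q = ((‖q‖ ^ 2 : ℝ) : Quaternion ℝ) := by
    rw [Quaternion.star_mul_self, pow_two, ← Quaternion.normSq_eq_norm_mul_self]
  have hs : q + star q = ((2 * q.re : ℝ) : Quaternion ℝ) := Quaternion.self_add_star' q
  have h : q ^ 2 - (q + star q) * q + star q * q = 0 := by
    rw [pow_two]; noncomm_ring
  rw [hs, hc, h1, h2] at h
  rw [sub_add_eq_add_sub, sub_eq_zero] at h
  exact h.symm

lemma mobius_N0 (q : Quaternion ℝ) :
    ‖q‖ ^ 2 • q ^ 2 - (2 * q.re) • q + 1 = (1 - ‖q‖ ^ 2) • (1 - q ^ 2 : Quaternion ℝ) := by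
  rw [quat_char q]
  module

set_option maxHeartbeats 1000000 in
lemma mobius_deriv (q : Quaternion ℝ) (hq : ‖q‖ < 1) (v : Quaternion ℝ) :
    HasDerivAt (fun t : ℝ => regularMobius q (q + t • v))
      (((1 - ‖q‖ ^ 2) • (1 - q ^ 2) : Quaternion ℝ)⁻¹ * (q * v * q - v)) 0 := by
  have hs : (1 : ℝ) - ‖q‖ ^ 2 ≠ 0 := by nlinarith [norm_nonneg q]
  have hc : (1 : Quaternion ℝ) - q ^ 2 ≠ 0 := by
    intro h
    have h1 : q ^ 2 = 1 := by linear_combination (norm := noncomm_ring) -h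
    have : ‖q ^ 2‖ = 1 := by rw [h1, norm_one]
    rw [norm_pow] at this
    nlinarith [norm_nonneg q]
  have hN0ne : (‖q‖ ^ 2 • q ^ 2 - (2 * q.re) • q + 1 : Quaternion ℝ) ≠ 0 := by
    rw [mobius_N0]
    exact smul_ne_zero hs hc
  have hline : HasDerivAt (fun t : ℝ => q + t • v) v 0 := by
    simpa using ((hasDerivAt_id (0:ℝ)).smul_const v).const_add q
  have hsq : HasDerivAt (fun t : ℝ => (q + t • v) ^ 2) (v * q + q * v) 0 := by
    have := hline.mul hline
    simp only [zero_smul, add_zero] at this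
    simpa [pow_two, Pi.mul_def] using this
  have hM : HasDerivAt (fun t : ℝ => (q + t • v) ^ 2 * q - (q + t • v) * (q ^ 2 + 1) + q)
      (q * v * q - v) 0 := by
    have h1 : HasDerivAt (fun t : ℝ => (q + t • v) ^ 2 * q) ((v * q + q * v) * q) 0 :=
      hsq.mul_const q
    have h2 : HasDerivAt (fun t : ℝ => (q + t • v) * (q ^ 2 + 1)) (v * (q ^ 2 + 1)) 0 :=
      hline.mul_const _
    have h3 := (h1.sub h2).add_const q
    have heq : (v * q + q * v) * q - v * (q ^ 2 + 1) = q * v * q - v := by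
      rw [pow_two]; noncomm_ring
    rwa [heq] at h3
  have hN : HasDerivAt (fun t : ℝ => ‖q‖ ^ 2 • (q + t • v) ^ 2 - (2 * q.re) • (q + t • v) + 1)
      (‖q‖ ^ 2 • (v * q + q * v) - (2 * q.re) • v) 0 :=
    ((hsq.const_smul (‖q‖ ^ 2)).sub (hline.const_smul (2 * q.re))).add_const 1
  have hNval' : ‖q‖ ^ 2 • (q + (0:ℝ) • v) ^ 2 - (2 * q.re) • (q + (0:ℝ) • v) + 1
      = ‖q‖ ^ 2 • q ^ 2 - (2 * q.re) • q + 1 := by norm_num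
  have hinv := hasFDerivAt_inv' (𝕜 := ℝ) (R := Quaternion ℝ) hN0ne
  rw [← hNval'] at hinv
  have hNinv := hinv.comp_hasDerivAt (0:ℝ) hN
  have hprod := hNinv.mul hM
  simp only [Function.comp_def, zero_smul, add_zero] at hprod
  have hM0 : q ^ 2 * q - q * (q ^ 2 + 1) + q = 0 := by noncomm_ring
  rw [hM0, mul_zero, zero_add] at hprod
  simp only [regularMobius]
  rw [← mobius_N0]
  exact hprod

theorem slice_hermitian_from_derivative (q : Quaternion ℝ) (hq : ‖q‖ < 1)
    (α β Dα Dβ : Quaternion ℝ)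
    (hα : HasDerivAt (fun t : ℝ => regularMobius q (q + t • α)) Dα 0)
    (hβ : HasDerivAt (fun t : ℝ => regularMobius q (q + t • β)) Dβ 0) :
    Dα * star Dβ =
      ((1 - ‖q‖ ^ 2) ^ 2)⁻¹ •
        ((1 - q ^ 2)⁻¹ * (α - q * α * q) * star (β - q * β * q) * (1 - star q ^ 2)⁻¹) := by
  have hDα : Dα = ((1 - ‖q‖ ^ 2) • (1 - q ^ 2) : Quaternion ℝ)⁻¹ * (q * α * q - α) :=
    hα.unique (mobius_deriv q hq α)
  have hDβ : Dβ = ((1 - ‖q‖ ^ 2) • (1 - q ^ 2) : Quaternion ℝ)⁻¹ * (q * β * q - β) :=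
    hβ.unique (mobius_deriv q hq β)
  rw [hDα, hDβ, smul_inv₀]
  simp only [smul_mul_assoc, mul_smul_comm, Quaternion.star_smul, smul_smul]
  congr 1
  · rw [← mul_inv, ← pow_two]
  · have hstar : star ((1:Quaternion ℝ) - q ^ 2) = 1 - star q ^ 2 := by
      rw [star_sub, star_one, star_pow]
    have h1 : q * α * q - α = -(α - q * α * q) := (neg_sub _ _).symm
    have h2 : star (q * β * q - β) = -(star (β - q * β * q)) := by
      rw [← star_neg, neg_sub]
    rw [star_mul, star_inv₀, hstar, h1, h2]
    noncomm_ring
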